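/- arXiv:2510.10372 — 4 statements merged into one kernel-verified Lean document; each statement's English description precedes it below -/
import Mathlib

section
/- If S and G are survival functions on [0,∞) with S(0)=G(0)=1, S nonincreasing càdlàg, and S = S_* (the true conditional survival function of the event time T), then the expectation of the doubly robust transformation 𝒯_t(S,G)(X,Δ) := -S(t){ 1(X≤t)Δ/(S(X)G(X−)) + ∫_{(0, X∧t]} dS(s)/(S(s)S(s−)G(s−)) } is zero, where X = T∧C, Δ = 1(T≤C), and T ⟂ C. -/
open MeasureTheory ProbabilityTheory Function Set

open Filter Topology in
/-- If `S` and `G` are survival functions on `[0,∞)` with `S(0) = G(0) = 1`,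
`S` nonincreasing càdlàg, and `S = S_*` (the true survival function of the event time `T`),
then the expectation of the doubly robust transformation
`𝒯_t(S,G)(X,Δ) = -S(t){1(X≤t)Δ/(S(X)G(X−)) + ∫_{(0,X∧t]} dS(s)/(S(s)S(s−)G(s−))}`
is zero, where `X = T ∧ C`, `Δ = 1(T ≤ C)`, and `T ⟂ C`.  The Lebesgue–Stieltjes measure
`νS` of the decrease of `S` satisfies `νS((a,b]) = S(a) − S(b)`, so that
`∫_{(0,u]} f dS = −∫_{(0,u]} f dνS`. -/
theorem dr_transform_zero_when_S_correct
    {Ω : Type*} [MeasurableSpace Ω] (μ : Measure Ω) [IsProbabilityMeasure μ]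
    (T C : Ω → ℝ) (hT : Measurable T) (hC : Measurable C)
    (hTpos : ∀ ω, 0 < T ω) (hCpos : ∀ ω, 0 < C ω)
    (hInd : IndepFun T C μ)
    (S G : ℝ → ℝ) (νS : Measure ℝ) [IsFiniteMeasure νS]
    (t : ℝ) (ht : 0 < t)
    (hS0 : S 0 = 1) (hG0 : G 0 = 1)
    (hSanti : AntitoneOn S (Set.Ici 0)) (hGanti : AntitoneOn G (Set.Ici 0))
    (hScadlag : ∀ x : ℝ, ContinuousWithinAt S (Set.Ici x) x)
    (hν : ∀ a b : ℝ, 0 ≤ a → a ≤ b → (νS (Set.Ioc a b)).toReal = S a - S b)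
    (cS cG : ℝ) (hcS : 0 < cS) (hcG : 0 < cG)
    (hSpos : ∀ s ∈ Set.Ioc (0:ℝ) t, cS ≤ S s)
    (hGpos : ∀ s ∈ Set.Ioc (0:ℝ) t, cG ≤ G s)
    (hStrue : ∀ s : ℝ, 0 ≤ s → S s = (μ {ω | s < T ω}).toReal) :
    ∫ ω, (-(S t) *
        ((if min (T ω) (C ω) ≤ t ∧ T ω ≤ C ω then (1:ℝ) else 0)
            / (S (min (T ω) (C ω)) * leftLim G (min (T ω) (C ω)))
         - ∫ s in Set.Ioc (0:ℝ) (min (min (T ω) (C ω)) t),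
             (S s * leftLim S s * leftLim G s)⁻¹ ∂νS)) ∂μ = 0 := by
  classical
  -- globally antitone modifications of S and G
  set S' : ℝ → ℝ := fun x => S (max x 0) with hS'def
  set G' : ℝ → ℝ := fun x => G (max x 0) with hG'def
  have hS'anti : Antitone S' := fun a b hab =>
    hSanti (le_max_right a 0) (le_max_right b 0) (max_le_max hab le_rfl)
  have hG'anti : Antitone G' := fun a b hab =>
    hGanti (le_max_right a 0) (le_max_right b 0) (max_le_max hab le_rfl)
  have hS'eq : ∀ x : ℝ, 0 ≤ x → S' x = S x := fun x hx => by
    simp only [hS'def, max_eq_left hx]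
  have hG'eq : ∀ x : ℝ, 0 ≤ x → G' x = G x := fun x hx => by
    simp only [hG'def, max_eq_left hx]
  -- left limits agree on the positive axis
  have hSL : ∀ x : ℝ, 0 < x → leftLim S x = leftLim S' x := by
    intro x hx
    have hmem : Set.Ioi (0:ℝ) ∈ 𝓝[<] x := nhdsWithin_le_nhds (Ioi_mem_nhds hx)
    have hev : S' =ᶠ[𝓝[<] x] S := by
      filter_upwards [hmem] with u hu
      exact hS'eq u (le_of_lt hu)
    exact leftLim_eq_of_tendsto (h := nhdsLT_neBot x)
      ((hS'anti.tendsto_leftLim x).congr' hev)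
  have hGLeq : ∀ x : ℝ, 0 < x → leftLim G x = leftLim G' x := by
    intro x hx
    have hmem : Set.Ioi (0:ℝ) ∈ 𝓝[<] x := nhdsWithin_le_nhds (Ioi_mem_nhds hx)
    have hev : G' =ᶠ[𝓝[<] x] G := by
      filter_upwards [hmem] with u hu
      exact hG'eq u (le_of_lt hu)
    exact leftLim_eq_of_tendsto (h := nhdsLT_neBot x)
      ((hG'anti.tendsto_leftLim x).congr' hev)
  -- measurability
  have hS'm : Measurable S' := hS'anti.measurable
  have hG'm : Measurable G' := hG'anti.measurable
  have hSLm : Measurable (leftLim S') := hS'anti.leftLim.measurable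
  have hGLm : Measurable (leftLim G') := hG'anti.leftLim.measurable
  -- lower bounds
  set m : ℝ := min cS 1 * min cG 1 with hmdef
  have hm : 0 < m := mul_pos (lt_min hcS one_pos) (lt_min hcG one_pos)
  have hS'lb : ∀ x : ℝ, x ≤ t → min cS 1 ≤ S' x := by
    intro x hx
    rcases le_or_gt x 0 with h | h
    · have : S' x = S 0 := by simp only [hS'def, max_eq_right h]
      rw [this, hS0]; exact min_le_right _ _
    · rw [hS'eq x h.le]; exact le_trans (min_le_left _ _) (hSpos x ⟨h, hx⟩)
  have hG'lb : ∀ x : ℝ, x ≤ t → min cG 1 ≤ G' x := by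
    intro x hx
    rcases le_or_gt x 0 with h | h
    · have : G' x = G 0 := by simp only [hG'def, max_eq_right h]
      rw [this, hG0]; exact min_le_right _ _
    · rw [hG'eq x h.le]; exact le_trans (min_le_left _ _) (hGpos x ⟨h, hx⟩)
  have hGLlb : ∀ x : ℝ, x ≤ t → min cG 1 ≤ leftLim G' x := fun x hx =>
    le_trans (hG'lb x hx) (hG'anti.le_leftLim le_rfl)
  have hS'Ioc : ∀ s ∈ Set.Ioc (0:ℝ) t, cS ≤ S' s := fun s hs => by
    rw [hS'eq s hs.1.le]; exact hSpos s hs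
  have hSLIoc : ∀ s ∈ Set.Ioc (0:ℝ) t, cS ≤ leftLim S' s := fun s hs =>
    le_trans (hS'Ioc s hs) (hS'anti.le_leftLim le_rfl)
  have hG'Ioc : ∀ s ∈ Set.Ioc (0:ℝ) t, cG ≤ G' s := fun s hs => by
    rw [hG'eq s hs.1.le]; exact hGpos s hs
  have hGLIoc : ∀ s ∈ Set.Ioc (0:ℝ) t, cG ≤ leftLim G' s := fun s hs =>
    le_trans (hG'Ioc s hs) (hG'anti.le_leftLim le_rfl)
  -- pushforward measures
  set ρ : Measure ℝ := μ.map T with hρdef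
  set κ : Measure ℝ := μ.map C with hκdef
  haveI : IsProbabilityMeasure ρ := Measure.isProbabilityMeasure_map hT.aemeasurable
  haveI : IsProbabilityMeasure κ := Measure.isProbabilityMeasure_map hC.aemeasurable
  have hmap : μ.map (fun ω => (T ω, C ω)) = ρ.prod κ :=
    (indepFun_iff_map_prod_eq_prod_map_map hT.aemeasurable hC.aemeasurable).mp hInd
  -- the left limit of S' is the probability of T ≥ s
  have hSL_eq : ∀ s : ℝ, 0 < s → leftLim S' s = (μ {ω | s ≤ T ω}).toReal := by
    intro s hs
    set u : ℕ → ℝ := fun n => s - 1 / (n + 1) with hudef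
    have hu_lt : ∀ n, u n < s := fun n => sub_lt_self s (by positivity)
    have hu_mono : Monotone u := by
      intro a b hab
      have : (1:ℝ) / (b + 1) ≤ 1 / (a + 1) := by
        apply one_div_le_one_div_of_le (by positivity)
        have := (Nat.cast_le (α := ℝ)).mpr hab
        linarith
      simp only [hudef]
      linarith
    have hu_tend : Filter.Tendsto u Filter.atTop (𝓝 s) := by
      have h1 : Filter.Tendsto (fun n : ℕ => 1 / ((n:ℝ) + 1)) Filter.atTop (𝓝 0) :=
        tendsto_one_div_add_atTop_nhds_zero_nat
      have h2 := (tendsto_const_nhds (x := s) (f := (Filter.atTop : Filter ℕ))).sub h1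
      simpa [hudef, sub_eq_add_neg, one_div] using h2
    have hu_tendlt : Filter.Tendsto u Filter.atTop (𝓝[<] s) :=
      tendsto_nhdsWithin_of_tendsto_nhds_of_eventually_within u hu_tend
        (Filter.Eventually.of_forall hu_lt)
    have h1 : Filter.Tendsto (fun n => S' (u n)) Filter.atTop (𝓝 (leftLim S' s)) :=
      (hS'anti.tendsto_leftLim s).comp hu_tendlt
    have hsets_anti : Antitone (fun n : ℕ => {ω | u n < T ω}) := by
      intro a b hab ω hω
      exact lt_of_le_of_lt (hu_mono hab) hω
    have h2 : Filter.Tendsto (fun n => μ {ω | u n < T ω}) Filter.atTop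
        (𝓝 (μ (⋂ n, {ω | u n < T ω}))) :=
      tendsto_measure_iInter_atTop
        (fun n => (hT measurableSet_Ioi).nullMeasurableSet) hsets_anti
        ⟨0, measure_ne_top _ _⟩
    have hiInter : (⋂ n, {ω | u n < T ω}) = {ω | s ≤ T ω} := by
      ext ω
      simp only [Set.mem_iInter, Set.mem_setOf_eq]
      constructor
      · intro h
        by_contra hlt
        push_neg at hlt
        obtain ⟨n, hn⟩ := exists_nat_one_div_lt (sub_pos.mpr hlt)
        exact absurd (h n) (not_lt.mpr (by simp only [hudef]; linarith))
      · intro h n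
        exact lt_of_lt_of_le (hu_lt n) h
    rw [hiInter] at h2
    have h2' : Filter.Tendsto (fun n => (μ {ω | u n < T ω}).toReal) Filter.atTop
        (𝓝 ((μ {ω | s ≤ T ω}).toReal)) :=
      (ENNReal.tendsto_toReal (measure_ne_top _ _)).comp h2
    have heq : ∀ᶠ n in Filter.atTop, S' (u n) = (μ {ω | u n < T ω}).toReal := by
      have hpos : ∀ᶠ n in Filter.atTop, 0 < u n := hu_tend.eventually (eventually_gt_nhds hs)
      filter_upwards [hpos] with n hn
      rw [hS'eq _ hn.le]
      exact hStrue _ hn.le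
    exact tendsto_nhds_unique (h1.congr' heq) h2'
  -- the law of T agrees with νS on subintervals of (0, t]
  have hTioc : ∀ a b : ℝ, 0 ≤ a → a ≤ b → ρ (Set.Ioc a b) = νS (Set.Ioc a b) := by
    intro a b ha hab
    have hsub : {ω | b < T ω} ⊆ {ω | a < T ω} := fun ω hω => lt_of_le_of_lt hab hω
    have h1 : ρ (Set.Ioc a b) = μ {ω | a < T ω} - μ {ω | b < T ω} := by
      rw [hρdef, Measure.map_apply hT measurableSet_Ioc]
      have : T ⁻¹' Set.Ioc a b = {ω | a < T ω} \ {ω | b < T ω} := by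
        ext ω
        simp only [Set.mem_preimage, Set.mem_Ioc, Set.mem_diff, Set.mem_setOf_eq, not_lt]
      rw [this, measure_diff hsub (hT measurableSet_Ioi).nullMeasurableSet (measure_ne_top _ _)]
    rw [← ENNReal.toReal_eq_toReal_iff' (by rw [h1]; exact (tsub_le_self.trans_lt (measure_lt_top _ _)).ne) (measure_ne_top _ _)]
    rw [h1, ENNReal.toReal_sub_of_le (measure_mono hsub) (measure_ne_top _ _), hν a b ha hab,
      ← hStrue a ha, ← hStrue b (ha.trans hab)]
  have hrestr : ρ.restrict (Set.Ioc 0 t) = νS.restrict (Set.Ioc 0 t) := by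
    apply Measure.ext_of_Ioc_finite
    · rw [Measure.restrict_apply_univ, Measure.restrict_apply_univ]
      exact hTioc 0 t le_rfl ht.le
    · intro a b hab
      rw [Measure.restrict_apply measurableSet_Ioc, Measure.restrict_apply measurableSet_Ioc,
        Set.Ioc_inter_Ioc]
      rcases le_or_gt (min b t) (max a 0) with h | h
      · rw [Set.Ioc_eq_empty (not_lt.mpr h)]; simp
      · exact hTioc _ _ (le_max_right a 0) h.le
  -- events
  have hIci : ∀ s : ℝ, κ (Set.Ici s) = μ {ω | s ≤ C ω} := by
    intro s; rw [hκdef, Measure.map_apply hC measurableSet_Ici]; rfl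
  have hXev : ∀ s : ℝ, μ {ω | s ≤ min (T ω) (C ω)}
      = μ {ω | s ≤ T ω} * μ {ω | s ≤ C ω} := by
    intro s
    have h := (indepFun_iff_measure_inter_preimage_eq_mul.mp hInd) (Set.Ici s) (Set.Ici s)
      measurableSet_Ici measurableSet_Ici
    have hset : {ω | s ≤ min (T ω) (C ω)} = T ⁻¹' Set.Ici s ∩ C ⁻¹' Set.Ici s := by
      ext ω
      simp [Set.mem_preimage, le_min_iff]
    rw [hset, h]; rfl
  -- the common integrand
  set ψ : ℝ → ℝ := fun x => (κ (Set.Ici x)).toReal • (S' x * leftLim G' x)⁻¹ with hψdef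
  -- the first term as a function on ℝ × ℝ
  set φ : ℝ × ℝ → ℝ := fun p =>
    (if min p.1 p.2 ≤ t ∧ p.1 ≤ p.2 then (1:ℝ) else 0)
      / (S' (min p.1 p.2) * leftLim G' (min p.1 p.2)) with hφdef
  have hminm : Measurable (fun p : ℝ × ℝ => min p.1 p.2) := measurable_fst.min measurable_snd
  have hφm : Measurable φ := by
    apply Measurable.div
    · exact Measurable.ite ((measurableSet_le hminm measurable_const).inter
        (measurableSet_le measurable_fst measurable_snd)) measurable_const measurable_const
    · exact (hS'm.comp hminm).mul (hGLm.comp hminm)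
  have hφbound : ∀ p : ℝ × ℝ, ‖φ p‖ ≤ m⁻¹ := by
    intro p
    rw [Real.norm_eq_abs]
    by_cases h : min p.1 p.2 ≤ t ∧ p.1 ≤ p.2
    · have hb : 0 ≤ S' (min p.1 p.2) :=
        le_trans (lt_min hcS one_pos).le (hS'lb _ h.1)
      have hden : m ≤ S' (min p.1 p.2) * leftLim G' (min p.1 p.2) :=
        mul_le_mul (hS'lb _ h.1) (hGLlb _ h.1) (lt_min hcG one_pos).le hb
      have hden0 : 0 < S' (min p.1 p.2) * leftLim G' (min p.1 p.2) := lt_of_lt_of_le hm hden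
      simp only [hφdef, if_pos h]
      rw [abs_of_nonneg (by positivity)]
      have h1 := one_div_le_one_div_of_le hm hden
      simpa [one_div] using h1
    · simp only [hφdef, if_neg h]
      rw [zero_div, abs_zero]
      positivity
  have hφint : Integrable φ (ρ.prod κ) :=
    (integrable_const (m⁻¹)).mono' hφm.aestronglyMeasurable
      (Filter.Eventually.of_forall hφbound)
  set A : Ω → ℝ := fun ω => φ (T ω, C ω) with hAdef
  have hAint : Integrable A μ :=
    (integrable_const (m⁻¹)).mono' (hφm.comp (hT.prodMk hC)).aestronglyMeasurable
      (Filter.Eventually.of_forall fun ω => hφbound _)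
  -- the second term
  set f : ℝ → ℝ := fun s =>
    (Set.Ioc (0:ℝ) t).indicator (fun s => (S' s * leftLim S' s * leftLim G' s)⁻¹) s with hfdef
  have hfm : Measurable f := (((hS'm.mul hSLm).mul hGLm).inv).indicator measurableSet_Ioc
  have hfnonneg : ∀ s, 0 ≤ f s := by
    intro s
    simp only [hfdef]
    by_cases hs : s ∈ Set.Ioc (0:ℝ) t
    · rw [Set.indicator_of_mem hs]
      have h1 := lt_of_lt_of_le hcS (hS'Ioc s hs)
      have h2 := lt_of_lt_of_le hcS (hSLIoc s hs)
      have h3 := lt_of_lt_of_le hcG (hGLIoc s hs)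
      positivity
    · rw [Set.indicator_of_notMem hs]
  have hfbound : ∀ s, f s ≤ (cS * cS * cG)⁻¹ := by
    intro s
    simp only [hfdef]
    by_cases hs : s ∈ Set.Ioc (0:ℝ) t
    · rw [Set.indicator_of_mem hs]
      have h1 := lt_of_lt_of_le hcS (hS'Ioc s hs)
      have h2 := lt_of_lt_of_le hcS (hSLIoc s hs)
      have h3 := lt_of_lt_of_le hcG (hGLIoc s hs)
      have hle : cS * cS * cG ≤ S' s * leftLim S' s * leftLim G' s := by
        apply mul_le_mul _ (hGLIoc s hs) hcG.le (by positivity)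
        exact mul_le_mul (hS'Ioc s hs) (hSLIoc s hs) hcS.le h1.le
      exact inv_anti₀ (by positivity) hle
    · rw [Set.indicator_of_notMem hs]
      positivity
  set F : Ω × ℝ → ℝ := fun p => if p.2 ≤ min (T p.1) (C p.1) then f p.2 else 0 with hFdef
  have hFm : Measurable F := Measurable.ite
      (measurableSet_le measurable_snd ((hT.comp measurable_fst).min (hC.comp measurable_fst)))
      (hfm.comp measurable_snd) measurable_const
  have hFbound : ∀ p, ‖F p‖ ≤ (cS * cS * cG)⁻¹ := by
    intro p
    rw [Real.norm_eq_abs]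
    simp only [hFdef]
    split_ifs with h
    · rw [abs_of_nonneg (hfnonneg _)]; exact hfbound _
    · rw [abs_zero]; positivity
  have hFint : Integrable F (μ.prod (νS.restrict (Set.Ioc 0 t))) :=
    (integrable_const _).mono' hFm.aestronglyMeasurable (Filter.Eventually.of_forall hFbound)
  set B : Ω → ℝ := fun ω => ∫ s in Set.Ioc (0:ℝ) t, F (ω, s) ∂νS with hBdef
  have hBint : Integrable B μ := hFint.integral_prod_left
  -- rewrite the integrand of the goal
  have hgoal_eq : ∀ ω, (-(S t) *
        ((if min (T ω) (C ω) ≤ t ∧ T ω ≤ C ω then (1:ℝ) else 0)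
            / (S (min (T ω) (C ω)) * leftLim G (min (T ω) (C ω)))
         - ∫ s in Set.Ioc (0:ℝ) (min (min (T ω) (C ω)) t),
             (S s * leftLim S s * leftLim G s)⁻¹ ∂νS)) = -(S t) * (A ω - B ω) := by
    intro ω
    have hX0 : 0 < min (T ω) (C ω) := lt_min (hTpos ω) (hCpos ω)
    have h1 : S (min (T ω) (C ω)) = S' (min (T ω) (C ω)) := (hS'eq _ hX0.le).symm
    have h2 : leftLim G (min (T ω) (C ω)) = leftLim G' (min (T ω) (C ω)) := hGLeq _ hX0
    have hset : Set.Ioc (0:ℝ) (min (min (T ω) (C ω)) t)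
        = Set.Ioc (0:ℝ) t ∩ Set.Iic (min (T ω) (C ω)) := by
      ext s
      simp only [Set.mem_Ioc, Set.mem_inter_iff, Set.mem_Iic, le_min_iff]
      tauto
    have hBeq : B ω = ∫ s in Set.Ioc (0:ℝ) (min (min (T ω) (C ω)) t),
        (S s * leftLim S s * leftLim G s)⁻¹ ∂νS := by
      have hFind : ∀ s, F (ω, s) = (Set.Iic (min (T ω) (C ω))).indicator f s := by
        intro s
        rw [hFdef, Set.indicator_apply]
        simp only [Set.mem_Iic]
      simp only [hBdef]
      simp only [hFind]
      rw [setIntegral_indicator measurableSet_Iic, ← hset]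
      apply setIntegral_congr_fun measurableSet_Ioc
      intro s hs
      have hs' : s ∈ Set.Ioc (0:ℝ) t := ⟨hs.1, le_trans hs.2 (min_le_right _ _)⟩
      simp only [hfdef]
      rw [Set.indicator_of_mem hs']
      rw [hS'eq s hs.1.le, hSL s hs.1, hGLeq s hs.1]
    rw [h1, h2, hBeq]
  -- value of the first integral
  have hAval : ∫ ω, A ω ∂μ = ∫ x in Set.Ioc (0:ℝ) t, ψ x ∂ρ := by
    have h0 : ∫ ω, A ω ∂μ = ∫ p, φ p ∂(ρ.prod κ) := by
      rw [← hmap]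
      exact (integral_map (hT.prodMk hC).aemeasurable hφm.aestronglyMeasurable).symm
    rw [h0, integral_prod φ hφint]
    have hinner : ∀ x : ℝ, ∫ c, φ (x, c) ∂κ = (Set.Iic t).indicator ψ x := by
      intro x
      by_cases hx : x ≤ t
      · have hfun : (fun c => φ (x, c)) = (Set.Ici x).indicator
            (fun _ => (S' x * leftLim G' x)⁻¹) := by
          funext c
          simp only [hφdef]
          by_cases hc : x ≤ c
          · rw [min_eq_left hc, if_pos ⟨hx, hc⟩,
              Set.indicator_of_mem (Set.mem_Ici.mpr hc), one_div]
          · rw [if_neg (fun h => hc h.2),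
              Set.indicator_of_notMem (fun h => hc (Set.mem_Ici.mp h)), zero_div]
        rw [hfun, integral_indicator_const _ measurableSet_Ici,
          Set.indicator_of_mem (Set.mem_Iic.mpr hx)]; rfl
      · have hfun : (fun c => φ (x, c)) = fun _ => (0:ℝ) := by
          funext c
          have hnot : ¬ (min x c ≤ t ∧ x ≤ c) := by
            rintro ⟨h1, h2⟩
            rw [min_eq_left h2] at h1
            exact hx h1
          simp only [hφdef]
          rw [if_neg hnot, zero_div]
        rw [hfun, integral_const,
          Set.indicator_of_notMem (fun hmem => hx (Set.mem_Iic.mp hmem))]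
        simp
    rw [show (fun x => ∫ c, φ (x, c) ∂κ) = fun x => (Set.Iic t).indicator ψ x from
      funext hinner]
    have h0' : ρ {x : ℝ | ¬ 0 < x} = 0 := by
      have he : {x : ℝ | ¬ 0 < x} = Set.Iic 0 := by ext x; simp [not_lt]
      rw [he, hρdef, Measure.map_apply hT measurableSet_Iic]
      have he2 : T ⁻¹' Set.Iic 0 = ∅ := by
        ext ω
        simp only [Set.mem_preimage, Set.mem_Iic, Set.mem_empty_iff_false, iff_false, not_le]
        exact hTpos ω
      rw [he2, measure_empty]
    have hx_ae : ∀ᵐ x ∂ρ, 0 < x := ae_iff.mpr h0'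
    have hae : (fun x => (Set.Iic t).indicator ψ x)
        =ᵐ[ρ] fun x => (Set.Ioc (0:ℝ) t).indicator ψ x := by
      filter_upwards [hx_ae] with x hx
      by_cases hxt : x ≤ t
      · rw [Set.indicator_of_mem (Set.mem_Iic.mpr hxt),
          Set.indicator_of_mem (Set.mem_Ioc.mpr ⟨hx, hxt⟩)]
      · rw [Set.indicator_of_notMem (fun hmem => hxt (Set.mem_Iic.mp hmem)),
          Set.indicator_of_notMem (fun hmem => hxt (Set.mem_Ioc.mp hmem).2)]
    rw [integral_congr_ae hae, integral_indicator measurableSet_Ioc]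
  -- value of the second integral
  have hBval : ∫ ω, B ω ∂μ = ∫ x in Set.Ioc (0:ℝ) t, ψ x ∂νS := by
    have hswap : ∫ ω, B ω ∂μ
        = ∫ s, ∫ ω, F (ω, s) ∂μ ∂(νS.restrict (Set.Ioc 0 t)) :=
      integral_integral_swap hFint
    have hinner : ∀ s : ℝ, ∫ ω, F (ω, s) ∂μ
        = (μ {ω | s ≤ min (T ω) (C ω)}).toReal • f s := by
      intro s
      have hfun : (fun ω => F (ω, s)) = ({ω | s ≤ min (T ω) (C ω)}).indicator
          (fun _ => f s) := by
        funext ω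
        rw [hFdef, Set.indicator_apply]
        simp only [Set.mem_setOf_eq]
      rw [hfun, integral_indicator_const _ (measurableSet_le measurable_const (hT.min hC))]; rfl
    rw [hswap]
    simp only [hinner]
    apply setIntegral_congr_fun measurableSet_Ioc
    intro s hs
    dsimp only
    have hS'0 : (0:ℝ) < S' s := lt_of_lt_of_le hcS (hS'Ioc s hs)
    have hSL0 : (0:ℝ) < leftLim S' s := lt_of_lt_of_le hcS (hSLIoc s hs)
    have hGL0 : (0:ℝ) < leftLim G' s := lt_of_lt_of_le hcG (hGLIoc s hs)
    rw [hXev s, ENNReal.toReal_mul, ← hSL_eq s hs.1]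
    simp only [hfdef, hψdef]
    rw [Set.indicator_of_mem hs, hIci, smul_eq_mul, smul_eq_mul]
    field_simp
  -- put everything together
  have key : ∫ ω, A ω ∂μ = ∫ ω, B ω ∂μ := by
    rw [hAval, hBval, hrestr]
  rw [show (∫ ω, (-(S t) *
        ((if min (T ω) (C ω) ≤ t ∧ T ω ≤ C ω then (1:ℝ) else 0)
            / (S (min (T ω) (C ω)) * leftLim G (min (T ω) (C ω)))
         - ∫ s in Set.Ioc (0:ℝ) (min (min (T ω) (C ω)) t),
             (S s * leftLim S s * leftLim G s)⁻¹ ∂νS)) ∂μ)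
      = ∫ ω, -(S t) * (A ω - B ω) ∂μ from
    integral_congr_ae (Filter.Eventually.of_forall hgoal_eq)]
  rw [integral_const_mul, integral_sub hAint hBint, key, sub_self, mul_zero]
end

section
/- Inverse-probability-of-censoring-weighting identity: for independent positive random variables T,C with G_*(t−)>0, S_*(t) = 1 − E[1(X ≤ t) Δ / G_*(X−)], where X = T∧C and Δ = 1(T ≤ C). -/
open MeasureTheory ProbabilityTheory Function Set Filter Topology

lemma ipcw_leftLim_eq {Ω : Type*} [MeasurableSpace Ω] (μ : Measure Ω) [IsProbabilityMeasure μ]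
    (C : Ω → ℝ) (hC : Measurable C)
    (Gstar : ℝ → ℝ) (hGstar : ∀ s : ℝ, Gstar s = (μ {ω | s < C ω}).toReal) (s : ℝ) :
    leftLim Gstar s = (μ {ω | s ≤ C ω}).toReal := by
  have hanti : Antitone Gstar := by
    intro a b hab
    rw [hGstar, hGstar]
    exact ENNReal.toReal_le_toReal (measure_ne_top _ _) (measure_ne_top _ _) |>.mpr
      (measure_mono (fun ω hω => lt_of_le_of_lt hab hω))
  have h1 : Tendsto Gstar (𝓝[<] s) (𝓝 (leftLim Gstar s)) := hanti.tendsto_leftLim s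
  set u : ℕ → ℝ := fun n => s - 1 / (n + 1) with hu_def
  have hu : Tendsto u atTop (𝓝 s) := by
    have : Tendsto (fun n : ℕ => 1 / ((n : ℝ) + 1)) atTop (𝓝 0) := tendsto_one_div_add_atTop_nhds_zero_nat
    have := tendsto_const_nhds (x := s) (f := atTop (α := ℕ)) |>.sub this
    simpa [hu_def, one_div] using this
  have hult : ∀ n, u n < s := by
    intro n
    have : (0:ℝ) < 1 / (n + 1) := by positivity
    simp only [hu_def]; linarith
  have huw : Tendsto u atTop (𝓝[<] s) :=
    tendsto_nhdsWithin_of_tendsto_nhds_of_eventually_within _ hu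
      (Eventually.of_forall hult)
  have h2 : Tendsto (fun n => Gstar (u n)) atTop (𝓝 (leftLim Gstar s)) := h1.comp huw
  have hInter : (⋂ n, {ω | u n < C ω}) = {ω | s ≤ C ω} := by
    ext ω
    simp only [mem_iInter, mem_setOf_eq]
    constructor
    · intro h
      exact le_of_tendsto' hu fun n => (h n).le
    · intro h n
      exact lt_of_lt_of_le (hult n) h
  have h3 : Tendsto (fun n => μ {ω | u n < C ω}) atTop (𝓝 (μ {ω | s ≤ C ω})) := by
    have := tendsto_measure_iInter_atTop (μ := μ) (s := fun n => {ω | u n < C ω})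
      (fun n => (hC measurableSet_Ioi).nullMeasurableSet)
      (fun a b hab => fun ω hω => lt_of_le_of_lt (by
        show u a ≤ u b
        have h1 : (1:ℝ) / (b + 1) ≤ 1 / (a + 1) := by
          apply one_div_le_one_div_of_le
          · positivity
          · have : (a:ℝ) ≤ b := Nat.cast_le.mpr hab
            linarith
        simp only [hu_def]
        linarith) hω)
      ⟨0, measure_ne_top _ _⟩
    rwa [hInter] at this
  have h4 : Tendsto (fun n => Gstar (u n)) atTop (𝓝 ((μ {ω | s ≤ C ω}).toReal)) := by
    have := (ENNReal.tendsto_toReal (measure_ne_top μ _)).comp h3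
    simpa only [Function.comp_def, hGstar] using this
  exact tendsto_nhds_unique h2 h4

/-- Inverse-probability-of-censoring-weighting identity: for independent
positive random variables `T, C` with `G_*(s−) > 0` on `(0, t]`,
`S_*(t) = 1 − E[1(X ≤ t) Δ / G_*(X−)]` where `X = T ∧ C` and `Δ = 1(T ≤ C)`. -/
theorem ipcw_identity
    {Ω : Type*} [MeasurableSpace Ω] (μ : Measure Ω) [IsProbabilityMeasure μ]
    (T C : Ω → ℝ) (hT : Measurable T) (hC : Measurable C)
    (hTpos : ∀ ω, 0 < T ω) (hCpos : ∀ ω, 0 < C ω)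
    (hInd : IndepFun T C μ)
    (t : ℝ) (ht : 0 < t)
    (Gstar : ℝ → ℝ) (hGstar : ∀ s : ℝ, Gstar s = (μ {ω | s < C ω}).toReal)
    (hGpos : ∀ s ∈ Set.Ioc (0:ℝ) t, 0 < leftLim Gstar s) :
    (μ {ω | t < T ω}).toReal
      = 1 - ∫ ω, (if min (T ω) (C ω) ≤ t ∧ T ω ≤ C ω then
          (leftLim Gstar (min (T ω) (C ω)))⁻¹ else 0) ∂μ := by
  set g : ℝ → ℝ := leftLim Gstar with hg_def
  have hg : ∀ s, g s = (μ {ω | s ≤ C ω}).toReal := ipcw_leftLim_eq μ C hC Gstar hGstar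
  have hganti : Antitone g := by
    intro a b hab
    rw [hg, hg]
    exact ENNReal.toReal_le_toReal (measure_ne_top _ _) (measure_ne_top _ _) |>.mpr
      (measure_mono (fun ω hω => le_trans hab hω))
  have hgmeas : Measurable g := hganti.measurable
  have hgt : 0 < g t := hGpos t ⟨ht, le_refl t⟩
  have hgpos : ∀ s, s ≤ t → 0 < g s := fun s hs => lt_of_lt_of_le hgt (hganti hs)
  set F : ℝ × ℝ → ℝ := fun p => if p.1 ≤ t ∧ p.1 ≤ p.2 then (g p.1)⁻¹ else 0 with hF_def
  have hFmeas : Measurable F := by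
    apply Measurable.ite
    · exact (measurableSet_le measurable_fst measurable_const).inter
        (measurableSet_le measurable_fst measurable_snd)
    · exact (hgmeas.comp measurable_fst).inv
    · exact measurable_const
  -- pointwise identification of the integrand
  have hpt : ∀ ω, (if min (T ω) (C ω) ≤ t ∧ T ω ≤ C ω then
      (leftLim Gstar (min (T ω) (C ω)))⁻¹ else 0) = F (T ω, C ω) := by
    intro ω
    by_cases h : T ω ≤ C ω
    · simp [hF_def, min_eq_left h, h, hg_def]
    · simp [hF_def, h]
  have hmap : μ.map (fun ω => (T ω, C ω)) = (μ.map T).prod (μ.map C) :=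
    (indepFun_iff_map_prod_eq_prod_map_map hT.aemeasurable hC.aemeasurable).mp hInd
  have hTCmeas : Measurable (fun ω => (T ω, C ω)) := hT.prodMk hC
  have hPT : IsProbabilityMeasure (μ.map T) := Measure.isProbabilityMeasure_map hT.aemeasurable
  have hPC : IsProbabilityMeasure (μ.map C) := Measure.isProbabilityMeasure_map hC.aemeasurable
  -- the integral as an integral over the product measure
  have hstep1 : ∫ ω, F (T ω, C ω) ∂μ = ∫ p, F p ∂((μ.map T).prod (μ.map C)) := by
    rw [← hmap, integral_map hTCmeas.aemeasurable]
    exact (hFmeas.aestronglyMeasurable)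
  -- integrability
  have hFbd : ∀ p : ℝ × ℝ, ‖F p‖ ≤ (g t)⁻¹ := by
    intro p
    simp only [hF_def]
    split_ifs with h
    · rw [Real.norm_eq_abs, abs_of_nonneg (inv_nonneg.mpr (hgpos p.1 h.1).le)]
      exact inv_anti₀ hgt (hganti h.1)
    · simp [inv_nonneg.mpr hgt.le]
  have hFint : Integrable F ((μ.map T).prod (μ.map C)) :=
    (integrable_const ((g t)⁻¹)).mono' hFmeas.aestronglyMeasurable
      (Eventually.of_forall hFbd)
  -- Fubini
  have hstep2 : ∫ p, F p ∂((μ.map T).prod (μ.map C))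
      = ∫ s, ∫ c, F (s, c) ∂(μ.map C) ∂(μ.map T) := integral_prod F hFint
  -- inner integral
  have hinner : ∀ s : ℝ, ∫ c, F (s, c) ∂(μ.map C) = if s ≤ t then (1:ℝ) else 0 := by
    intro s
    by_cases hs : s ≤ t
    · have hEq : (fun c => F (s, c)) = Set.indicator (Ici s) (fun _ => (g s)⁻¹) := by
        funext c
        simp only [hF_def, Set.indicator_apply, mem_Ici]
        by_cases h : s ≤ c <;> simp [h, hs]
      rw [hEq, integral_indicator_const _ measurableSet_Ici]
      have hmc : (μ.map C) (Ici s) = μ {ω | s ≤ C ω} := by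
        rw [Measure.map_apply hC measurableSet_Ici]
        rfl
      rw [measureReal_def, hmc, smul_eq_mul, ← hg, if_pos hs]
      exact mul_inv_cancel₀ (ne_of_gt (hgpos s hs))
    · have hEq : (fun c => F (s, c)) = fun _ => (0:ℝ) := by
        funext c
        simp [hF_def, hs]
      rw [hEq, integral_zero, if_neg hs]
  -- outer integral
  have houter : ∫ s, (if s ≤ t then (1:ℝ) else 0) ∂(μ.map T) = (μ {ω | T ω ≤ t}).toReal := by
    have hEq : (fun s => if s ≤ t then (1:ℝ) else 0)
        = Set.indicator (Iic t) (fun _ => (1:ℝ)) := by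
      funext s
      simp [Set.indicator_apply, mem_Iic]
    rw [hEq, integral_indicator_const _ measurableSet_Iic, measureReal_def, Measure.map_apply hT measurableSet_Iic]
    simp [Set.preimage, mem_Iic]
  have hkey : ∫ ω, (if min (T ω) (C ω) ≤ t ∧ T ω ≤ C ω then
      (leftLim Gstar (min (T ω) (C ω)))⁻¹ else 0) ∂μ = (μ {ω | T ω ≤ t}).toReal := by
    calc ∫ ω, (if min (T ω) (C ω) ≤ t ∧ T ω ≤ C ω then
          (leftLim Gstar (min (T ω) (C ω)))⁻¹ else 0) ∂μ
        = ∫ ω, F (T ω, C ω) ∂μ := by exact integral_congr_ae (Eventually.of_forall hpt)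
      _ = ∫ p, F p ∂((μ.map T).prod (μ.map C)) := hstep1
      _ = ∫ s, ∫ c, F (s, c) ∂(μ.map C) ∂(μ.map T) := hstep2
      _ = ∫ s, (if s ≤ t then (1:ℝ) else 0) ∂(μ.map T) := by
          exact integral_congr_ae (Eventually.of_forall hinner)
      _ = (μ {ω | T ω ≤ t}).toReal := houter
  rw [hkey]
  -- complement arithmetic
  have hcompl : {ω | t < T ω} = {ω | T ω ≤ t}ᶜ := by
    ext ω; simp [not_le]
  have hadd : (μ {ω | T ω ≤ t}).toReal + (μ {ω | T ω ≤ t}ᶜ).toReal = 1 := by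
    have hms : MeasurableSet {ω | T ω ≤ t} := hT measurableSet_Iic
    rw [← ENNReal.toReal_add (measure_ne_top _ _) (measure_ne_top _ _),
      measure_add_measure_compl hms]
    simp
  rw [hcompl]
  linarith
end

section
/- Survival-to-hazard stability (discrete time): with S, Ŝ product-form survival functions from hazards λ, λ̂ as above, if S(t^J) ≥ c > 0, then for each j, |λ̂(t^j) − λ(t^j)| ≤ (2/c) · max_{i ≤ j} |Ŝ(t^i) − S(t^i)|. -/
/-- Survival-to-hazard stability (discrete time): with product-form survival
functions `S, Ŝ` built from hazards `λ, λ̂ : {t¹,...,t^J} → [0,1]`, if `S(t^J) ≥ c > 0`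
and `Ŝ(t^j) > 0` for all `j`, then `|λ̂(t^j) − λ(t^j)| ≤ (2/c) · max_{i ≤ j} |Ŝ(t^i) − S(t^i)|`. -/
theorem survival_to_hazard_stability
    (J : ℕ) (hJ : 0 < J)
    (tt : Fin J → ℝ) (htt : StrictMono tt) (httpos : ∀ i, 0 < tt i)
    (lam lamhat : Fin J → ℝ)
    (hlam : ∀ i, lam i ∈ Set.Icc (0:ℝ) 1)
    (hlamhat : ∀ i, lamhat i ∈ Set.Icc (0:ℝ) 1)
    (S Shat : Fin J → ℝ)
    (hS : ∀ i, S i = ∏ i' ∈ Finset.univ.filter (fun i' => tt i' ≤ tt i), (1 - lam i'))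
    (hShat : ∀ i, Shat i = ∏ i' ∈ Finset.univ.filter (fun i' => tt i' ≤ tt i), (1 - lamhat i'))
    (c : ℝ) (hc : 0 < c)
    (hSJ : c ≤ S ⟨J - 1, Nat.sub_lt hJ one_pos⟩)
    (hShatpos : ∀ i, 0 < Shat i)
    (j : Fin J) (M : ℝ)
    (hM : ∀ i, i ≤ j → |Shat i - S i| ≤ M) :
    |lamhat j - lam j| ≤ (2 / c) * M := by
  have hfilter : ∀ i : Fin J,
      Finset.univ.filter (fun i' => tt i' ≤ tt i) = Finset.Iic i := by
    intro i; ext i'; simp [htt.le_iff_le]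
  have hS' : ∀ i, S i = ∏ i' ∈ Finset.Iic i, (1 - lam i') := by
    intro i; rw [hS, hfilter]
  have hShat' : ∀ i, Shat i = ∏ i' ∈ Finset.Iic i, (1 - lamhat i') := by
    intro i; rw [hShat, hfilter]
  set Q := ∏ i' ∈ Finset.Iio j, (1 - lam i') with hQ
  set Qhat := ∏ i' ∈ Finset.Iio j, (1 - lamhat i') with hQhat
  have hjni : j ∉ Finset.Iio j := by simp
  have hSplit : S j = (1 - lam j) * Q := by
    rw [hS', ← Finset.Iio_insert, Finset.prod_insert hjni]
  have hSplitHat : Shat j = (1 - lamhat j) * Qhat := by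
    rw [hShat', ← Finset.Iio_insert, Finset.prod_insert hjni]
  have hQnonneg : 0 ≤ Q := by
    apply Finset.prod_nonneg
    intro i _
    have := (hlam i).2; linarith
  -- c ≤ Q
  have hsub : Finset.Iio j ⊆ Finset.Iic (⟨J - 1, Nat.sub_lt hJ one_pos⟩ : Fin J) := by
    intro i _
    rw [Finset.mem_Iic, Fin.le_def]
    have := i.isLt; simp; omega
  have hcQ : c ≤ Q := by
    have hsd : (∏ i' ∈ Finset.Iic (⟨J - 1, Nat.sub_lt hJ one_pos⟩ : Fin J) \ Finset.Iio j,
        (1 - lam i')) * Q = S ⟨J - 1, Nat.sub_lt hJ one_pos⟩ := by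
      rw [hS']; exact Finset.prod_sdiff hsub
    have hle1 : (∏ i' ∈ Finset.Iic (⟨J - 1, Nat.sub_lt hJ one_pos⟩ : Fin J) \ Finset.Iio j,
        (1 - lam i')) ≤ 1 := by
      apply Finset.prod_le_one
      · intro i _; have := (hlam i).2; linarith
      · intro i _; have := (hlam i).1; linarith
    calc c ≤ S ⟨J - 1, Nat.sub_lt hJ one_pos⟩ := hSJ
      _ = _ * Q := hsd.symm
      _ ≤ 1 * Q := mul_le_mul_of_nonneg_right hle1 hQnonneg
      _ = Q := one_mul Q
  have hM0 : 0 ≤ M := le_trans (abs_nonneg _) (hM j le_rfl)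
  -- |Qhat - Q| ≤ M
  have hQM : |Qhat - Q| ≤ M := by
    rcases Nat.eq_zero_or_pos j.val with h0 | hpos
    · have hempty : Finset.Iio j = ∅ := by
        apply Finset.eq_empty_of_forall_notMem
        intro i hi
        rw [Finset.mem_Iio, Fin.lt_def] at hi
        omega
      rw [hQ, hQhat, hempty]
      simpa using hM0
    · set k : Fin J := ⟨j.val - 1, by omega⟩ with hk
      have hIio : Finset.Iio j = Finset.Iic k := by
        ext i
        rw [Finset.mem_Iio, Finset.mem_Iic, Fin.lt_def, Fin.le_def]
        simp [hk]; omega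
      have hkj : k ≤ j := by rw [Fin.le_def]; simp only [hk]; omega
      have : Qhat - Q = Shat k - S k := by
        rw [hQ, hQhat, hIio, hS', hShat']
      rw [this]; exact hM k hkj
  -- ring identity
  have hid : Q * (lamhat j - lam j) =
      (Qhat - Q) * (1 - lamhat j) - (Shat j - S j) := by
    rw [hSplit, hSplitHat]; ring
  have habs1 : |1 - lamhat j| ≤ 1 := by
    have h1 := (hlamhat j).1; have h2 := (hlamhat j).2
    rw [abs_le]; constructor <;> linarith
  have hkey : Q * |lamhat j - lam j| ≤ 2 * M := by
    have : Q * |lamhat j - lam j| = |Q * (lamhat j - lam j)| := by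
      rw [abs_mul, abs_of_nonneg hQnonneg]
    rw [this, hid]
    calc |(Qhat - Q) * (1 - lamhat j) - (Shat j - S j)|
        ≤ |(Qhat - Q) * (1 - lamhat j)| + |Shat j - S j| := abs_sub _ _
      _ ≤ M * 1 + M := by
          gcongr
          · rw [abs_mul]
            exact mul_le_mul hQM habs1 (abs_nonneg _) hM0
          · exact hM j le_rfl
      _ = 2 * M := by ring
  have hfin : c * |lamhat j - lam j| ≤ 2 * M :=
    le_trans (mul_le_mul_of_nonneg_right hcQ (abs_nonneg _)) hkey
  rw [div_mul_eq_mul_div, le_div_iff₀ hc]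
  linarith
end

section
/- Mixed-bias remainder in discrete time: with S_*, Ŝ product-form survival functions with hazards λ_*, λ̂ on {t¹<...<t^J}, Ŝ(t^j) ≥ c > 0, and functions G_*, Ĝ with Ĝ(t^{j}) ≥ c > 0 for all j (and G_*(t⁰)=Ĝ(t⁰)=1 at t⁰:=0), the remainder R := -Ŝ(t^J) Σ_{j=1}^J [(Ĝ(t^{j−1}) − G_*(t^{j−1}))/Ĝ(t^{j−1})] · [(Ŝ(t^{j−1})(1−λ̂(t^j)) − S_*(t^{j−1})(1−λ_*(t^j)))/(Ŝ(t^{j−1})(1−λ̂(t^j))) − (Ŝ(t^{j−1}) − S_*(t^{j−1}))/Ŝ(t^{j−1})] equals Ŝ(t^J) Σ_{j=1}^J [(Ĝ(t^{j−1}) − G_*(t^{j−1}))/Ĝ(t^{j−1})] · S_*(t^{j−1})(λ̂(t^j) − λ_*(t^j))/Ŝ(t^j), and hence |R| ≤ (J/c²) · max_j |Ĝ(t^{j−1}) − G_*(t^{j−1})| · max_j |λ̂(t^j) − λ_*(t^j)|. -/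
/-- Product-form survival function from a discrete hazard: `S(t^n) = ∏_{j=1}^n (1 − λ(t^j))`. -/
noncomputable def survProd (lam : ℕ → ℝ) (n : ℕ) : ℝ :=
  ∏ j ∈ Finset.Icc 1 n, (1 - lam j)

/-- The discrete-time doubly robust remainder in its original form. -/
noncomputable def Rorig (J : ℕ) (lamS lamSh G Gh : ℕ → ℝ) : ℝ :=
  -(survProd lamSh J) * ∑ j ∈ Finset.Icc 1 J,
    ((Gh (j - 1) - G (j - 1)) / Gh (j - 1)) *
      ((survProd lamSh (j - 1) * (1 - lamSh j) - survProd lamS (j - 1) * (1 - lamS j)) /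
          (survProd lamSh (j - 1) * (1 - lamSh j))
        - (survProd lamSh (j - 1) - survProd lamS (j - 1)) / survProd lamSh (j - 1))

/-- The discrete-time doubly robust remainder in its mixed-bias (product) form. -/
noncomputable def Rprod (J : ℕ) (lamS lamSh G Gh : ℕ → ℝ) : ℝ :=
  survProd lamSh J * ∑ j ∈ Finset.Icc 1 J,
    ((Gh (j - 1) - G (j - 1)) / Gh (j - 1)) *
      (survProd lamS (j - 1) * (lamSh j - lamS j) / survProd lamSh j)

lemma survProd_step (lam : ℕ → ℝ) (j : ℕ) (hj : 1 ≤ j) :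
    survProd lam j = survProd lam (j - 1) * (1 - lam j) := by
  obtain ⟨k, rfl⟩ := Nat.exists_eq_add_of_le hj
  simp only [survProd]
  rw [show 1 + k = k + 1 by omega, Finset.prod_Icc_succ_top (by omega), Nat.add_sub_cancel]

lemma survProd_nonneg (lam : ℕ → ℝ) (n : ℕ)
    (h : ∀ i ∈ Finset.Icc 1 n, lam i ∈ Set.Ico (0:ℝ) 1) :
    0 ≤ survProd lam n := by
  apply Finset.prod_nonneg
  intro i hi
  have := h i hi
  simp only [Set.mem_Ico] at this
  linarith [this.2]

lemma survProd_le_one (lam : ℕ → ℝ) (n : ℕ)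
    (h : ∀ i ∈ Finset.Icc 1 n, lam i ∈ Set.Ico (0:ℝ) 1) :
    survProd lam n ≤ 1 := by
  apply Finset.prod_le_one
  · intro i hi
    have := h i hi
    simp only [Set.mem_Ico] at this
    linarith [this.2]
  · intro i hi
    have := h i hi
    simp only [Set.mem_Ico] at this
    linarith [this.1]

/-- Mixed-bias remainder in discrete time: the remainder `R` equals the
product form, and hence `|R| ≤ (J/c²) · max_j |Ĝ(t^{j−1}) − G_*(t^{j−1})| · max_j |λ̂(t^j) − λ_*(t^j)|`. -/
theorem mixed_bias_remainder_discrete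
    (J : ℕ) (lamS lamSh G Gh : ℕ → ℝ)
    (hlamS : ∀ j ∈ Finset.Icc 1 J, lamS j ∈ Set.Ico (0:ℝ) 1)
    (hlamSh : ∀ j ∈ Finset.Icc 1 J, lamSh j ∈ Set.Ico (0:ℝ) 1)
    (c : ℝ) (hc : 0 < c)
    (hShat : ∀ j ≤ J, c ≤ survProd lamSh j)
    (hGh : ∀ j ≤ J, c ≤ Gh j)
    (hG0 : G 0 = 1) (hGh0 : Gh 0 = 1) :
    Rorig J lamS lamSh G Gh = Rprod J lamS lamSh G Gh ∧
    ∀ M₁ M₂ : ℝ, 0 ≤ M₁ → 0 ≤ M₂ →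
      (∀ j ∈ Finset.Icc 1 J, |Gh (j - 1) - G (j - 1)| ≤ M₁) →
      (∀ j ∈ Finset.Icc 1 J, |lamSh j - lamS j| ≤ M₂) →
      |Rorig J lamS lamSh G Gh| ≤ ((J : ℝ) / c ^ 2) * M₁ * M₂ := by
  have heq : Rorig J lamS lamSh G Gh = Rprod J lamS lamSh G Gh := by
    unfold Rorig Rprod
    rw [neg_mul, ← mul_neg, ← Finset.sum_neg_distrib]
    congr 1
    apply Finset.sum_congr rfl
    intro j hj
    simp only [Finset.mem_Icc] at hj
    have h1j : 1 ≤ j := hj.1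
    have hsne : survProd lamSh (j - 1) ≠ 0 := by
      have := hShat (j - 1) (by omega)
      linarith
    have hune : (1 - lamSh j) ≠ 0 := by
      have := hlamSh j (by simp [Finset.mem_Icc]; omega)
      simp only [Set.mem_Ico] at this
      linarith [this.2]
    have hGhne : Gh (j - 1) ≠ 0 := by
      have := hGh (j - 1) (by omega); linarith
    rw [survProd_step lamSh j h1j]
    field_simp
    ring
  refine ⟨heq, fun M₁ M₂ hM₁ hM₂ hB₁ hB₂ => ?_⟩
  rw [heq]
  unfold Rprod
  have hSJ : |survProd lamSh J| ≤ 1 := by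
    rw [abs_of_nonneg (survProd_nonneg lamSh J hlamSh)]
    exact survProd_le_one lamSh J hlamSh
  have hterm : ∀ j ∈ Finset.Icc 1 J,
      |((Gh (j - 1) - G (j - 1)) / Gh (j - 1)) *
        (survProd lamS (j - 1) * (lamSh j - lamS j) / survProd lamSh j)|
      ≤ M₁ * M₂ / c ^ 2 := by
    intro j hj
    have hjm : j ∈ Finset.Icc 1 J := hj
    simp only [Finset.mem_Icc] at hj
    have hGhj : c ≤ Gh (j - 1) := hGh (j - 1) (by omega)
    have hSj : c ≤ survProd lamSh j := hShat j hj.2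
    have hSs : 0 ≤ survProd lamS (j - 1) ∧ survProd lamS (j - 1) ≤ 1 := by
      constructor
      · exact survProd_nonneg lamS (j - 1) (fun i hi => hlamS i (by
          simp only [Finset.mem_Icc] at hi ⊢; omega))
      · exact survProd_le_one lamS (j - 1) (fun i hi => hlamS i (by
          simp only [Finset.mem_Icc] at hi ⊢; omega))
    rw [abs_mul, abs_div, abs_div, abs_mul]
    have h1 : |Gh (j - 1) - G (j - 1)| / |Gh (j - 1)| ≤ M₁ / c := by
      apply div_le_div₀ (le_trans (abs_nonneg _) (hB₁ j hjm)) (hB₁ j hjm) hc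
      rw [abs_of_nonneg (by linarith)]; exact hGhj
    have h2 : |survProd lamS (j - 1)| * |lamSh j - lamS j| / |survProd lamSh j|
        ≤ M₂ / c := by
      apply div_le_div₀ (le_trans (abs_nonneg _) (hB₂ j hjm)) ?_ hc
      · rw [abs_of_nonneg (by linarith)]; exact hSj
      · calc |survProd lamS (j - 1)| * |lamSh j - lamS j|
            ≤ 1 * M₂ := by
              apply mul_le_mul ?_ (hB₂ j hjm) (abs_nonneg _) zero_le_one
              rw [abs_of_nonneg hSs.1]; exact hSs.2
          _ = M₂ := one_mul M₂
    calc |Gh (j - 1) - G (j - 1)| / |Gh (j - 1)| *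
          (|survProd lamS (j - 1)| * |lamSh j - lamS j| / |survProd lamSh j|)
        ≤ (M₁ / c) * (M₂ / c) := by
          apply mul_le_mul h1 h2 (by positivity) (by positivity)
      _ = M₁ * M₂ / c ^ 2 := by ring
  calc |survProd lamSh J * ∑ j ∈ Finset.Icc 1 J,
          ((Gh (j - 1) - G (j - 1)) / Gh (j - 1)) *
            (survProd lamS (j - 1) * (lamSh j - lamS j) / survProd lamSh j)|
      = |survProd lamSh J| * |∑ j ∈ Finset.Icc 1 J,
          ((Gh (j - 1) - G (j - 1)) / Gh (j - 1)) *
            (survProd lamS (j - 1) * (lamSh j - lamS j) / survProd lamSh j)| := abs_mul _ _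
    _ ≤ 1 * ∑ j ∈ Finset.Icc 1 J, (M₁ * M₂ / c ^ 2) := by
        apply mul_le_mul hSJ ?_ (abs_nonneg _) zero_le_one
        exact le_trans (Finset.abs_sum_le_sum_abs _ _) (Finset.sum_le_sum hterm)
    _ = ((J : ℝ) / c ^ 2) * M₁ * M₂ := by
        rw [Finset.sum_const, Nat.card_Icc]
        simp only [nsmul_eq_mul]
        push_cast [Nat.add_sub_cancel]
        ring
end
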